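/- Cluster/truncation lemma for the CCR (sufficiency direction): Let W and W^T be families of multilinear functionals on test functions (indexed by labels a ∈ {in, loc, out}) related by the cluster expansion W(f₁,…,fₙ) = Σ_{partitions I of {1,…,n}} ∏_{{j₁<…<j_l} ∈ I} W^T(f_{j₁},…,f_{j_l}), with W^T vanishing on single arguments (one-point functions zero), and with two-point function W^T(f, h) for two out-labels satisfying W^T(f,h) − W^T(h,f) = i (b²/m²) D(f,h). Suppose that for all n ≥ 3, all positions k, and all labels, the antisymmetrization of W^T in two adjacent out-arguments vanishes: W^T(f₁,…,f_k, f_{k+1},…,fₙ) − W^T(f₁,…,f_{k+1}, f_k,…,fₙ) = 0. Then the full (non-truncated) functions satisfy W(f₁,…,f_k,f_{k+1},…,fₙ) − W(f₁,…,f_{k+1},f_k,…,fₙ) = i (b²/m²) D(f_k, f_{k+1}) · W(f₁,…,f_{k−1}, f_{k+2},…,fₙ) whenever positions k, k+1 carry the out-label. -/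

import Mathlib

open Finset
open scoped Classical

/-- Field labels: incoming, local and outgoing fields. -/
inductive Lab | inF | locF | outF
deriving DecidableEq

/-- `P` is a partition of `{0, …, n−1}` into disjoint nonempty blocks. -/
def IsPartition {n : ℕ} (P : Finset (Finset (Fin n))) : Prop :=
  (∅ ∉ P) ∧ ∀ i : Fin n, ∃! b : Finset (Fin n), b ∈ P ∧ i ∈ b

/-- Evaluation of a truncated functional `T` on a block `b` of a partition: the
elements of `b` are listed in increasing order and the corresponding labeled test
functions of the list `xs` are fed to `T`. -/
noncomputable def blockEval {𝒟 : Type*} (T : List (Lab × 𝒟) → ℂ)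
    (xs : List (Lab × 𝒟)) (b : Finset (Fin xs.length)) : ℂ :=
  T ((b.sort (· ≤ ·)).map xs.get)

section aux

lemma aux_sort_map_of_strictMonoOn {α β : Type*} [LinearOrder α] [LinearOrder β]
    [DecidableEq β] (g : α → β) (b : Finset α)
    (hmono : ∀ x ∈ b, ∀ y ∈ b, x < y → g x < g y) :
    (b.image g).sort (· ≤ ·) = (b.sort (· ≤ ·)).map g := by
  have hs : (b.sort (· ≤ ·)).Pairwise (· < ·) := (Finset.sortedLT_sort b).pairwise
  have hmap : ((b.sort (· ≤ ·)).map g).Pairwise (· < ·) := by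
    rw [List.pairwise_iff_getElem]
    intro i j hi hj hij
    simp only [List.getElem_map]
    have hi' : i < (b.sort (· ≤ ·)).length := by simpa using hi
    have hj' : j < (b.sort (· ≤ ·)).length := by simpa using hj
    refine hmono _ ((Finset.mem_sort _).1 (List.getElem_mem hi')) _
      ((Finset.mem_sort _).1 (List.getElem_mem hj')) ?_
    rw [List.pairwise_iff_getElem] at hs
    exact hs i j hi' hj' hij
  refine List.Perm.eq_of_pairwise' ((Finset.sortedLT_sort _).pairwise.imp le_of_lt) (hmap.imp le_of_lt) ?_
  refine List.perm_of_nodup_nodup_toFinset_eq (Finset.sort_nodup _ _) hmap.nodup ?_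
  ext x
  simp [Finset.mem_sort]

lemma aux_sorted_adj {n : ℕ} (k k' : Fin n) (hkk' : (k : ℕ) + 1 = (k' : ℕ)) :
    ∀ (s : List (Fin n)), s.Pairwise (· < ·) → k ∈ s → k' ∈ s →
      ∃ u v, s = u ++ k :: k' :: v := by
  have hklt : k < k' := by rw [Fin.lt_def]; omega
  intro s
  induction s with
  | nil => simp
  | cons a t ih =>
    intro hs hk hk'
    rcases List.mem_cons.1 hk with rfl | hkt
    · have hk't : k' ∈ t := by
        rcases List.mem_cons.1 hk' with h | h
        · exact absurd h.symm (ne_of_lt hklt)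
        · exact h
      cases t with
      | nil => simp at hk't
      | cons b t' =>
        have hb : k < b := (List.pairwise_cons.1 hs).1 b List.mem_cons_self
        have hbk' : b = k' := by
          rcases List.mem_cons.1 hk't with h | h
          · exact h.symm
          · have hb' : b < k' := (List.pairwise_cons.1 (List.pairwise_cons.1 hs).2).1 k' h
            rw [Fin.lt_def] at hb hb'
            omega
        subst hbk'
        exact ⟨[], t', rfl⟩
    · have ha : a < k := (List.pairwise_cons.1 hs).1 k hkt
      have hk't : k' ∈ t := by
        rcases List.mem_cons.1 hk' with h | h
        · rw [← h] at ha; exact absurd (ha.trans hklt) (lt_irrefl k')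
        · exact h
      obtain ⟨u, v, huv⟩ := ih (List.pairwise_cons.1 hs).2 hkt hk't
      exact ⟨a :: u, v, by rw [huv]; rfl⟩

lemma aux_part_disj {n : ℕ} {P : Finset (Finset (Fin n))} (hP : IsPartition P)
    {b b' : Finset (Fin n)} (hb : b ∈ P) (hb' : b' ∈ P) {i : Fin n}
    (hib : i ∈ b) (hib' : i ∈ b') : b = b' := by
  obtain ⟨c, _, hc⟩ := hP.2 i
  rw [hc b ⟨hb, hib⟩, hc b' ⟨hb', hib'⟩]

lemma aux_part_image {n : ℕ} (σ : Equiv.Perm (Fin n)) {P : Finset (Finset (Fin n))}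
    (hP : IsPartition P) : IsPartition (P.image (Finset.image σ)) := by
  constructor
  · intro hmem
    obtain ⟨b, hb, hbe⟩ := Finset.mem_image.1 hmem
    rw [Finset.image_eq_empty] at hbe
    exact hP.1 (hbe ▸ hb)
  · intro i
    obtain ⟨b, ⟨hb, hib⟩, hbu⟩ := hP.2 (σ.symm i)
    refine ⟨b.image σ, ⟨Finset.mem_image_of_mem _ hb, ?_⟩, ?_⟩
    · exact Finset.mem_image.2 ⟨σ.symm i, hib, σ.apply_symm_apply i⟩
    · rintro c ⟨hc, hic⟩
      obtain ⟨b', hb', rfl⟩ := Finset.mem_image.1 hc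
      obtain ⟨j, hj, hji⟩ := Finset.mem_image.1 hic
      have hjs : j = σ.symm i := by rw [← hji, Equiv.symm_apply_apply]
      subst hjs
      rw [hbu b' ⟨hb', hj⟩]

lemma aux_image_image_invol {n : ℕ} (σ : Equiv.Perm (Fin n)) (hσ : ∀ x, σ (σ x) = x)
    (P : Finset (Finset (Fin n))) :
    (P.image (Finset.image σ)).image (Finset.image σ) = P := by
  rw [Finset.image_image]
  have hcomp : (Finset.image σ ∘ Finset.image σ) = id := by
    funext b
    simp [Finset.image_image, Function.comp_def, hσ]
  rw [hcomp, Finset.image_id]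

variable {𝒟 : Type*} (xs ys : List (Lab × 𝒟)) (p q : Lab × 𝒟)

lemma getA (i r : ℕ) (hi : i = r) (hr : r < xs.length)
    (hi' : i < (xs ++ [p, q] ++ ys).length) :
    (xs ++ [p, q] ++ ys)[i] = xs[r] := by
  subst hi
  rw [List.getElem_append_left (by simpa using Nat.lt_add_right 2 hr),
    List.getElem_append_left hr]

lemma getB (i : ℕ) (hi : i = xs.length) (hi' : i < (xs ++ [p, q] ++ ys).length) :
    (xs ++ [p, q] ++ ys)[i] = p := by
  subst hi
  rw [List.getElem_append_left (by simp), List.getElem_append_right (le_refl _)]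
  simp

lemma getC (i : ℕ) (hi : i = xs.length + 1) (hi' : i < (xs ++ [p, q] ++ ys).length) :
    (xs ++ [p, q] ++ ys)[i] = q := by
  subst hi
  rw [List.getElem_append_left (by simp), List.getElem_append_right (by omega)]
  simp

lemma getD (i r : ℕ) (hi : i = xs.length + 2 + r) (hr : r < ys.length)
    (hi' : i < (xs ++ [p, q] ++ ys).length) :
    (xs ++ [p, q] ++ ys)[i] = ys[r] := by
  have hl : (xs ++ [p, q]).length = xs.length + 2 := by simp
  rw [List.getElem_append_right (by omega)]
  congr 1
  omega

lemma aux_W_cast (T : List (Lab × 𝒟) → ℂ) (L : List (Lab × 𝒟)) (N : ℕ)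
    (hN : L.length = N) :
    (∑ P ∈ Finset.univ.filter (IsPartition (n := L.length)), ∏ b ∈ P, blockEval T L b)
      = ∑ P ∈ Finset.univ.filter (IsPartition (n := N)),
          ∏ b ∈ P, T ((b.sort (· ≤ ·)).map (fun i => L.get (Fin.cast hN.symm i))) := by
  subst hN; rfl

end aux

set_option maxHeartbeats 2000000 in
lemma aux_main {𝒟 : Type*} (T : List (Lab × 𝒟) → ℂ) (d : ℂ) (f h : 𝒟) {n m : ℕ}
    (G : Fin n → Lab × 𝒟) (k k' : Fin n) (hkk' : (k : ℕ) + 1 = (k' : ℕ))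
    (hGk : G k = (Lab.outF, f)) (hGk' : G k' = (Lab.outF, h))
    (e : Fin m → Fin n) (hemono : StrictMono e)
    (hek : ∀ j, e j ≠ k ∧ e j ≠ k')
    (hesurj : ∀ i : Fin n, i ≠ k → i ≠ k' → ∃ j, e j = i)
    (htwo : T [(Lab.outF, f), (Lab.outF, h)] - T [(Lab.outF, h), (Lab.outF, f)] = d)
    (hsym : ∀ (u v : List (Lab × 𝒟)), 1 ≤ u.length + v.length →
      T (u ++ [(Lab.outF, f), (Lab.outF, h)] ++ v)
        = T (u ++ [(Lab.outF, h), (Lab.outF, f)] ++ v)) :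
    (∑ P ∈ Finset.univ.filter (IsPartition (n := n)),
        ∏ b ∈ P, T ((b.sort (· ≤ ·)).map G))
      - (∑ P ∈ Finset.univ.filter (IsPartition (n := n)),
        ∏ b ∈ P, T ((b.sort (· ≤ ·)).map (G ∘ Equiv.swap k k')))
      = d * ∑ Q ∈ Finset.univ.filter (IsPartition (n := m)),
          ∏ b ∈ Q, T ((b.sort (· ≤ ·)).map (G ∘ e)) := by
  classical
  set σ : Equiv.Perm (Fin n) := Equiv.swap k k' with hσdef
  have hkne : k ≠ k' := fun hc => by rw [hc] at hkk'; omega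
  have hklt : k < k' := by rw [Fin.lt_def]; omega
  have hσk : σ k = k' := Equiv.swap_apply_left k k'
  have hσk' : σ k' = k := Equiv.swap_apply_right k k'
  have hσfix : ∀ i, i ≠ k → i ≠ k' → σ i = i :=
    fun i h1 h2 => Equiv.swap_apply_of_ne_of_ne h1 h2
  have hσinv : ∀ x, σ (σ x) = x := fun x => Equiv.swap_apply_self k k' x
  -- swap is strictly monotone on blocks not containing both k and k'
  have hswapmono : ∀ b : Finset (Fin n), ¬(k ∈ b ∧ k' ∈ b) →
      ∀ x ∈ b, ∀ y ∈ b, x < y → σ x < σ y := by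
    intro b hb x hx y hy hxy
    rcases eq_or_ne x k with rfl | h1
    · have h4 : y ≠ k' := fun hc => hb ⟨hx, hc ▸ hy⟩
      have h3 : y ≠ x := (ne_of_lt hxy).symm
      rw [hσk, hσfix y h3 h4, Fin.lt_def]
      have h4v : (y : ℕ) ≠ (k' : ℕ) := fun hc => h4 (Fin.ext hc)
      rw [Fin.lt_def] at hxy
      omega
    · rcases eq_or_ne x k' with rfl | h2
      · have h3 : y ≠ k := by
          rintro rfl
          rw [Fin.lt_def] at hxy
          omega
        have h4 : y ≠ x := (ne_of_lt hxy).symm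
        rw [hσk', hσfix y h3 h4, Fin.lt_def]
        rw [Fin.lt_def] at hxy
        omega
      · rw [hσfix x h1 h2]
        rcases eq_or_ne y k with rfl | h3
        · rw [hσk]
          exact hxy.trans hklt
        · rcases eq_or_ne y k' with rfl | h4
          · rw [hσk', Fin.lt_def]
            have h1v : (x : ℕ) ≠ (k : ℕ) := fun hc => h1 (Fin.ext hc)
            rw [Fin.lt_def] at hxy
            omega
          · rw [hσfix y h3 h4]
            exact hxy
  -- F1 : blocks avoiding k and k' are insensitive to the swap
  have F1 : ∀ b : Finset (Fin n), k ∉ b → k' ∉ b →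
      (b.sort (· ≤ ·)).map (G ∘ σ) = (b.sort (· ≤ ·)).map G := by
    intro b hkb hk'b
    apply List.map_congr_left
    intro x hx
    have hxb : x ∈ b := (Finset.mem_sort _).1 hx
    have h1 : x ≠ k := fun hc => hkb (hc ▸ hxb)
    have h2 : x ≠ k' := fun hc => hk'b (hc ▸ hxb)
    simp [Function.comp_apply, hσfix x h1 h2]
  -- F2 : for blocks not containing both, sorting commutes with the swap image
  have F2 : ∀ b : Finset (Fin n), ¬(k ∈ b ∧ k' ∈ b) →
      ((b.image σ).sort (· ≤ ·)).map G = (b.sort (· ≤ ·)).map (G ∘ σ) := by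
    intro b hb
    rw [aux_sort_map_of_strictMonoOn σ b (hswapmono b hb), List.map_map]
  -- F3 : blocks containing both k and k'
  have F3 : ∀ b : Finset (Fin n), k ∈ b → k' ∈ b →
      ∃ u v : List (Lab × 𝒟),
        (b.sort (· ≤ ·)).map G = u ++ [(Lab.outF, f), (Lab.outF, h)] ++ v
        ∧ (b.sort (· ≤ ·)).map (G ∘ σ) = u ++ [(Lab.outF, h), (Lab.outF, f)] ++ v
        ∧ (b = {k, k'} → u = [] ∧ v = [])
        ∧ (b ≠ {k, k'} → 1 ≤ u.length + v.length) := by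
    intro b hkb hk'b
    obtain ⟨u, v, hsort⟩ := aux_sorted_adj k k' hkk' (b.sort (· ≤ ·))
      (Finset.sortedLT_sort b).pairwise ((Finset.mem_sort _).2 hkb) ((Finset.mem_sort _).2 hk'b)
    have hnd : (u ++ k :: k' :: v).Nodup := by rw [← hsort]; exact Finset.sort_nodup _ _
    rw [List.nodup_append] at hnd
    obtain ⟨hu, hkv, hdisj⟩ := hnd
    have hum : ∀ x ∈ u, x ≠ k ∧ x ≠ k' := by
      intro x hxu
      constructor
      · intro hc; exact hdisj x hxu k List.mem_cons_self hc
      · intro hc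
        exact hdisj x hxu k' (List.mem_cons_of_mem _ List.mem_cons_self) hc
    have hkv' : k ∉ k' :: v ∧ (k' :: v).Nodup := List.nodup_cons.1 hkv
    have hk'v : k' ∉ v ∧ v.Nodup := List.nodup_cons.1 hkv'.2
    have hvm : ∀ x ∈ v, x ≠ k ∧ x ≠ k' := by
      intro x hxv
      constructor
      · intro hc; subst hc; exact hkv'.1 (List.mem_cons_of_mem _ hxv)
      · intro hc; subst hc; exact hk'v.1 hxv
    have hmapu : u.map (G ∘ σ) = u.map G := by
      apply List.map_congr_left
      intro x hxu
      simp [Function.comp_apply, hσfix x (hum x hxu).1 (hum x hxu).2]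
    have hmapv : v.map (G ∘ σ) = v.map G := by
      apply List.map_congr_left
      intro x hxv
      simp [Function.comp_apply, hσfix x (hvm x hxv).1 (hvm x hxv).2]
    refine ⟨u.map G, v.map G, ?_, ?_, ?_, ?_⟩
    · rw [hsort]
      simp only [List.map_append, List.map_cons]
      simp [hGk, hGk']
    · rw [hsort]
      simp only [List.map_append, List.map_cons]
      rw [hmapu, hmapv]
      simp [Function.comp_apply, hσk, hσk', hGk, hGk']
    · intro hb
      have : (u ++ k :: k' :: v).length = 2 := by
        rw [← hsort, Finset.length_sort, hb]
        rw [Finset.card_insert_of_notMem (by simp [hkne]), Finset.card_singleton]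
      simp only [List.length_append, List.length_cons] at this
      constructor
      · exact List.map_eq_nil_iff.2 (List.eq_nil_of_length_eq_zero (by omega))
      · exact List.map_eq_nil_iff.2 (List.eq_nil_of_length_eq_zero (by omega))
    · intro hb
      rw [List.length_map, List.length_map]
      by_contra hlen
      push_neg at hlen
      have hu0 : u = [] := List.eq_nil_of_length_eq_zero (by omega)
      have hv0 : v = [] := List.eq_nil_of_length_eq_zero (by omega)
      subst hu0; subst hv0
      apply hb
      have hbt : b = (b.sort (· ≤ ·)).toFinset := (Finset.sort_toFinset _ _).symm
      rw [hbt, hsort]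
      simp

  -- split facts about erase blocks
  have hera : ∀ P : Finset (Finset (Fin n)), IsPartition P →
      ({k, k'} : Finset (Fin n)) ∈ P →
      ∀ b ∈ P.erase ({k, k'} : Finset (Fin n)), k ∉ b ∧ k' ∉ b := by
    intro P hP hMem b hb
    obtain ⟨hbne, hbP⟩ := Finset.mem_erase.1 hb
    exact ⟨fun hc => hbne (aux_part_disj hP hbP hMem hc (Finset.mem_insert_self _ _)),
      fun hc => hbne (aux_part_disj hP hbP hMem hc
        (Finset.mem_insert_of_mem (Finset.mem_singleton_self _)))⟩
  -- class 2 : k, k' together in a block of size ≥ 3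
  have class2 : ∀ P : Finset (Finset (Fin n)), IsPartition P →
      (∃ b ∈ P, k ∈ b ∧ k' ∈ b) → ({k, k'} : Finset (Fin n)) ∉ P →
      (∏ b ∈ P, T ((b.sort (· ≤ ·)).map (G ∘ σ)))
        = ∏ b ∈ P, T ((b.sort (· ≤ ·)).map G) := by
    intro P hP hTog hnMem
    obtain ⟨b₀, hb₀P, hkb₀, hk'b₀⟩ := hTog
    apply Finset.prod_congr rfl
    intro b hbP
    by_cases hbb₀ : b = b₀
    · subst hbb₀
      obtain ⟨u, v, h1, h2, _, h4⟩ := F3 b hkb₀ hk'b₀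
      have hbne : b ≠ {k, k'} := fun hc => hnMem (hc ▸ hbP)
      rw [h1, h2, hsym u v (h4 hbne)]
    · have hkb : k ∉ b := fun hc => hbb₀ (aux_part_disj hP hbP hb₀P hc hkb₀)
      have hk'b : k' ∉ b := fun hc => hbb₀ (aux_part_disj hP hbP hb₀P hc hk'b₀)
      rw [F1 b hkb hk'b]
  -- class 3 : {k, k'} is a block of P
  have hsortkk' : ({k, k'} : Finset (Fin n)).sort (· ≤ ·) = [k, k'] := by
    have h1 : ∀ b ∈ ({k'} : Finset (Fin n)), k ≤ b := by
      intro b hb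
      rw [Finset.mem_singleton] at hb
      subst hb
      exact le_of_lt hklt
    have h2 : k ∉ ({k'} : Finset (Fin n)) := by simp [hkne]
    rw [show (({k, k'} : Finset (Fin n)).sort (· ≤ ·))
        = ((insert k {k'} : Finset (Fin n)).sort (· ≤ ·)) from rfl,
      Finset.sort_insert _ h1 h2, Finset.sort_singleton]
  have class3 : ∀ P : Finset (Finset (Fin n)), IsPartition P →
      ({k, k'} : Finset (Fin n)) ∈ P →
      (∏ b ∈ P, T ((b.sort (· ≤ ·)).map G))
          - (∏ b ∈ P, T ((b.sort (· ≤ ·)).map (G ∘ σ)))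
        = d * ∏ b ∈ P.erase ({k, k'} : Finset (Fin n)), T ((b.sort (· ≤ ·)).map G) := by
    intro P hP hMem
    have herase : ∀ b ∈ P.erase ({k, k'} : Finset (Fin n)),
        T ((b.sort (· ≤ ·)).map (G ∘ σ)) = T ((b.sort (· ≤ ·)).map G) := by
      intro b hb
      obtain ⟨hkb, hk'b⟩ := hera P hP hMem b hb
      rw [F1 b hkb hk'b]
    rw [← Finset.mul_prod_erase P (fun b => T ((b.sort (· ≤ ·)).map G)) hMem,
      ← Finset.mul_prod_erase P (fun b => T ((b.sort (· ≤ ·)).map (G ∘ σ))) hMem,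
      Finset.prod_congr rfl herase, hsortkk']
    simp only [List.map_cons, List.map_nil, Function.comp_apply, hσk, hσk', hGk, hGk']
    rw [← sub_mul, htwo]
  -- class 1 : k, k' in different blocks; cancellation by the swap involution
  have class1 : ∑ P ∈ (Finset.univ.filter (IsPartition (n := n))).filter
        (fun P => ¬ ∃ b ∈ P, k ∈ b ∧ k' ∈ b),
        ∏ b ∈ P, T ((b.sort (· ≤ ·)).map (G ∘ σ))
      = ∑ P ∈ (Finset.univ.filter (IsPartition (n := n))).filter
        (fun P => ¬ ∃ b ∈ P, k ∈ b ∧ k' ∈ b),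
        ∏ b ∈ P, T ((b.sort (· ≤ ·)).map G) := by
    refine Finset.sum_nbij' (fun P => P.image (Finset.image σ))
      (fun P => P.image (Finset.image σ)) ?_ ?_ ?_ ?_ ?_
    · intro P hP
      rw [Finset.mem_filter, Finset.mem_filter] at hP
      rw [Finset.mem_filter, Finset.mem_filter]
      obtain ⟨⟨_, hPart⟩, hTog⟩ := hP
      refine ⟨⟨Finset.mem_univ _, aux_part_image σ hPart⟩, ?_⟩
      intro hc
      obtain ⟨b', hb', hkb', hk'b'⟩ := hc
      obtain ⟨b, hbP, rfl⟩ := Finset.mem_image.1 hb'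
      obtain ⟨z, hzb, hzk⟩ := Finset.mem_image.1 hkb'
      obtain ⟨w, hwb, hwk'⟩ := Finset.mem_image.1 hk'b'
      have hz : z = k' := by rw [← hσinv z, hzk, hσk]
      have hw : w = k := by rw [← hσinv w, hwk', hσk']
      exact hTog ⟨b, hbP, hw ▸ hwb, hz ▸ hzb⟩
    · intro P hP
      rw [Finset.mem_filter, Finset.mem_filter] at hP
      rw [Finset.mem_filter, Finset.mem_filter]
      obtain ⟨⟨_, hPart⟩, hTog⟩ := hP
      refine ⟨⟨Finset.mem_univ _, aux_part_image σ hPart⟩, ?_⟩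
      intro hc
      obtain ⟨b', hb', hkb', hk'b'⟩ := hc
      obtain ⟨b, hbP, rfl⟩ := Finset.mem_image.1 hb'
      obtain ⟨z, hzb, hzk⟩ := Finset.mem_image.1 hkb'
      obtain ⟨w, hwb, hwk'⟩ := Finset.mem_image.1 hk'b'
      have hz : z = k' := by rw [← hσinv z, hzk, hσk]
      have hw : w = k := by rw [← hσinv w, hwk', hσk']
      exact hTog ⟨b, hbP, hw ▸ hwb, hz ▸ hzb⟩
    · intro P _
      exact aux_image_image_invol σ hσinv P
    · intro P _
      exact aux_image_image_invol σ hσinv P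
    · intro P hP
      rw [Finset.mem_filter] at hP
      obtain ⟨_, hTog⟩ := hP
      rw [Finset.prod_image
        (fun x _ y _ hxy => Finset.image_injective (Equiv.injective σ) hxy)]
      apply Finset.prod_congr rfl
      intro b hbP
      exact (congrArg T (F2 b (fun hc => hTog ⟨b, hbP, hc⟩))).symm
  -- the bijection between class-3 partitions and partitions of Fin m
  have einj : Function.Injective e := hemono.injective
  have hknr : ∀ b : Finset (Fin m), k ∉ b.image e := by
    intro b hc
    obtain ⟨j, _, hj⟩ := Finset.mem_image.1 hc
    exact (hek j).1 hj
  have hk'nr : ∀ b : Finset (Fin m), k' ∉ b.image e := by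
    intro b hc
    obtain ⟨j, _, hj⟩ := Finset.mem_image.1 hc
    exact (hek j).2 hj
  have hkkQ : ∀ Q : Finset (Finset (Fin m)),
      ({k, k'} : Finset (Fin n)) ∉ Q.image (Finset.image e) := by
    intro Q hc
    obtain ⟨b, _, hb⟩ := Finset.mem_image.1 hc
    exact hknr b (by rw [hb]; exact Finset.mem_insert_self _ _)
  have himgpre : ∀ b : Finset (Fin n), k ∉ b → k' ∉ b →
      (b.preimage e einj.injOn).image e = b := by
    intro b hkb hk'b
    apply Finset.coe_injective
    rw [Finset.coe_image, Finset.coe_preimage]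
    rw [Set.image_preimage_eq_iff]
    intro i hib
    obtain ⟨j, hj⟩ := hesurj i (fun hc => hkb (hc ▸ hib)) (fun hc => hk'b (hc ▸ hib))
    exact ⟨j, hj⟩
  have hpreimg : ∀ b : Finset (Fin m), (b.image e).preimage e einj.injOn = b := by
    intro b
    apply Finset.coe_injective
    rw [Finset.coe_preimage, Finset.coe_image, Set.preimage_image_eq _ einj]
  have hΨpart : ∀ Q : Finset (Finset (Fin m)), IsPartition Q →
      IsPartition (insert ({k, k'} : Finset (Fin n)) (Q.image (Finset.image e))) := by
    intro Q hQ
    constructor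
    · intro hc
      rcases Finset.mem_insert.1 hc with hc | hc
      · exact absurd hc.symm (Finset.insert_ne_empty _ _)
      · obtain ⟨b, hbQ, hb⟩ := Finset.mem_image.1 hc
        rw [Finset.image_eq_empty] at hb
        exact hQ.1 (hb ▸ hbQ)
    · intro i
      by_cases hik : i = k ∨ i = k'
      · refine ⟨{k, k'}, ⟨Finset.mem_insert_self _ _, ?_⟩, ?_⟩
        · rcases hik with rfl | rfl
          · exact Finset.mem_insert_self _ _
          · exact Finset.mem_insert_of_mem (Finset.mem_singleton_self _)
        · rintro c ⟨hc, hic⟩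
          rcases Finset.mem_insert.1 hc with rfl | hc
          · rfl
          · obtain ⟨b, hbQ, rfl⟩ := Finset.mem_image.1 hc
            obtain ⟨j, _, hj⟩ := Finset.mem_image.1 hic
            rcases hik with rfl | rfl
            · exact absurd hj (hek j).1
            · exact absurd hj (hek j).2
      · push_neg at hik
        obtain ⟨j, rfl⟩ := hesurj i hik.1 hik.2
        obtain ⟨b, ⟨hbQ, hjb⟩, hbu⟩ := hQ.2 j
        refine ⟨b.image e, ⟨Finset.mem_insert_of_mem (Finset.mem_image_of_mem _ hbQ),
          Finset.mem_image_of_mem _ hjb⟩, ?_⟩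
        rintro c ⟨hc, hic⟩
        rcases Finset.mem_insert.1 hc with rfl | hc
        · rcases Finset.mem_insert.1 hic with hc' | hc'
          · exact absurd hc' hik.1
          · exact absurd (Finset.mem_singleton.1 hc') hik.2
        · obtain ⟨b', hb'Q, rfl⟩ := Finset.mem_image.1 hc
          obtain ⟨j', hj'b', hj'⟩ := Finset.mem_image.1 hic
          have hjj : j' = j := einj hj'
          subst hjj
          rw [hbu b' ⟨hb'Q, hj'b'⟩]
  have hΨ'part : ∀ P : Finset (Finset (Fin n)), IsPartition P →
      ({k, k'} : Finset (Fin n)) ∈ P →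
      IsPartition ((P.erase ({k, k'} : Finset (Fin n))).image
        (fun b => b.preimage e einj.injOn)) := by
    intro P hP hMem
    constructor
    · intro hc
      obtain ⟨b, hb, hbe⟩ := Finset.mem_image.1 hc
      obtain ⟨hkb, hk'b⟩ := hera P hP hMem b hb
      have hb2 := himgpre b hkb hk'b
      rw [hbe, Finset.image_empty] at hb2
      obtain ⟨hbne, hbP⟩ := Finset.mem_erase.1 hb
      exact hP.1 (hb2 ▸ hbP)
    · intro j
      have hjk := hek j
      obtain ⟨b, ⟨hbP, hjb⟩, hbu⟩ := hP.2 (e j)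
      have hbne : b ≠ {k, k'} := by
        rintro rfl
        rcases Finset.mem_insert.1 hjb with hc | hc
        · exact hjk.1 hc
        · exact hjk.2 (Finset.mem_singleton.1 hc)
      have hbe : b ∈ P.erase ({k, k'} : Finset (Fin n)) := Finset.mem_erase.2 ⟨hbne, hbP⟩
      refine ⟨b.preimage e einj.injOn,
        ⟨Finset.mem_image_of_mem _ hbe, Finset.mem_preimage.2 hjb⟩, ?_⟩
      rintro c ⟨hc, hjc⟩
      obtain ⟨b', hb'e, rfl⟩ := Finset.mem_image.1 hc
      have hj'b' : e j ∈ b' := Finset.mem_preimage.1 hjc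
      have hbb : b' = b := hbu b' ⟨(Finset.mem_erase.1 hb'e).2, hj'b'⟩
      subst hbb
      rfl
  have claimC : ∑ P ∈ (Finset.univ.filter (IsPartition (n := n))).filter
        (fun P => ({k, k'} : Finset (Fin n)) ∈ P),
        ∏ b ∈ P.erase ({k, k'} : Finset (Fin n)), T ((b.sort (· ≤ ·)).map G)
      = ∑ Q ∈ Finset.univ.filter (IsPartition (n := m)),
        ∏ b ∈ Q, T ((b.sort (· ≤ ·)).map (G ∘ e)) := by
    refine Finset.sum_nbij'
      (fun P => (P.erase ({k, k'} : Finset (Fin n))).image (fun b => b.preimage e einj.injOn))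
      (fun Q => insert ({k, k'} : Finset (Fin n)) (Q.image (Finset.image e))) ?_ ?_ ?_ ?_ ?_
    · intro P hP
      rw [Finset.mem_filter, Finset.mem_filter] at hP
      obtain ⟨⟨_, hPart⟩, hMem⟩ := hP
      exact Finset.mem_filter.2 ⟨Finset.mem_univ _, hΨ'part P hPart hMem⟩
    · intro Q hQ
      rw [Finset.mem_filter] at hQ
      exact Finset.mem_filter.2 ⟨Finset.mem_filter.2
        ⟨Finset.mem_univ _, hΨpart Q hQ.2⟩, Finset.mem_insert_self _ _⟩
    · intro P hP
      rw [Finset.mem_filter, Finset.mem_filter] at hP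
      obtain ⟨⟨_, hPart⟩, hMem⟩ := hP
      rw [Finset.image_image]
      have hco : ∀ b ∈ P.erase ({k, k'} : Finset (Fin n)),
          (Finset.image e ∘ fun b => b.preimage e einj.injOn) b = id b := by
        intro b hb
        obtain ⟨hkb, hk'b⟩ := hera P hPart hMem b hb
        exact himgpre b hkb hk'b
      rw [Finset.image_congr hco, Finset.image_id, Finset.insert_erase hMem]
    · intro Q hQ
      rw [Finset.erase_insert (hkkQ Q), Finset.image_image]
      have hco : ∀ b ∈ Q, ((fun b => b.preimage e einj.injOn) ∘ Finset.image e) b = id b :=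
        fun b _ => hpreimg b
      rw [Finset.image_congr hco, Finset.image_id]
    · intro P hP
      rw [Finset.mem_filter, Finset.mem_filter] at hP
      obtain ⟨⟨_, hPart⟩, hMem⟩ := hP
      rw [Finset.prod_image ?hinj]
      case hinj =>
        intro x hx y hy hxy
        have hx' := hera P hPart hMem x hx
        have hy' := hera P hPart hMem y hy
        dsimp only at hxy
        rw [← himgpre x hx'.1 hx'.2, ← himgpre y hy'.1 hy'.2, hxy]
      apply Finset.prod_congr rfl
      intro b hb
      obtain ⟨hkb, hk'b⟩ := hera P hPart hMem b hb
      have h2 : ((b.preimage e einj.injOn).image e).sort (· ≤ ·)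
          = ((b.preimage e einj.injOn).sort (· ≤ ·)).map e :=
        aux_sort_map_of_strictMonoOn e _ (fun x _ y _ hxy => hemono hxy)
      rw [himgpre b hkb hk'b] at h2
      rw [h2, List.map_map]
  -- assembling the three classes
  have hsplit : ∀ X : Finset (Finset (Fin n)) → ℂ,
      ∑ P ∈ Finset.univ.filter (IsPartition (n := n)), X P
        = (∑ P ∈ (Finset.univ.filter (IsPartition (n := n))).filter
            (fun P => ({k, k'} : Finset (Fin n)) ∈ P), X P)
          + (∑ P ∈ ((Finset.univ.filter (IsPartition (n := n))).filter
              (fun P => ∃ b ∈ P, k ∈ b ∧ k' ∈ b)).filter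
              (fun P => ¬ ({k, k'} : Finset (Fin n)) ∈ P), X P)
          + (∑ P ∈ (Finset.univ.filter (IsPartition (n := n))).filter
              (fun P => ¬ ∃ b ∈ P, k ∈ b ∧ k' ∈ b), X P) := by
    intro X
    rw [← Finset.sum_filter_add_sum_filter_not (Finset.univ.filter (IsPartition (n := n)))
      (fun P => ∃ b ∈ P, k ∈ b ∧ k' ∈ b) X]
    congr 1
    rw [← Finset.sum_filter_add_sum_filter_not
      ((Finset.univ.filter (IsPartition (n := n))).filter
        (fun P => ∃ b ∈ P, k ∈ b ∧ k' ∈ b))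
      (fun P => ({k, k'} : Finset (Fin n)) ∈ P) X]
    congr 2
    rw [Finset.filter_filter]
    apply Finset.filter_congr
    intro P _
    constructor
    · rintro ⟨_, hMem⟩; exact hMem
    · intro hMem
      exact ⟨⟨{k, k'}, hMem, Finset.mem_insert_self _ _,
        Finset.mem_insert_of_mem (Finset.mem_singleton_self _)⟩, hMem⟩
  rw [← Finset.sum_sub_distrib,
    hsplit (fun P => (∏ b ∈ P, T ((b.sort (· ≤ ·)).map G))
      - ∏ b ∈ P, T ((b.sort (· ≤ ·)).map (G ∘ σ)))]
  have e2 : ∑ P ∈ ((Finset.univ.filter (IsPartition (n := n))).filter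
        (fun P => ∃ b ∈ P, k ∈ b ∧ k' ∈ b)).filter
        (fun P => ¬ ({k, k'} : Finset (Fin n)) ∈ P),
      ((∏ b ∈ P, T ((b.sort (· ≤ ·)).map G))
        - ∏ b ∈ P, T ((b.sort (· ≤ ·)).map (G ∘ σ))) = 0 := by
    apply Finset.sum_eq_zero
    intro P hP
    rw [Finset.mem_filter, Finset.mem_filter, Finset.mem_filter] at hP
    obtain ⟨⟨⟨_, hPart⟩, hTog⟩, hnMem⟩ := hP
    rw [class2 P hPart hTog hnMem, sub_self]
  have e3 : ∑ P ∈ (Finset.univ.filter (IsPartition (n := n))).filter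
        (fun P => ¬ ∃ b ∈ P, k ∈ b ∧ k' ∈ b),
      ((∏ b ∈ P, T ((b.sort (· ≤ ·)).map G))
        - ∏ b ∈ P, T ((b.sort (· ≤ ·)).map (G ∘ σ))) = 0 := by
    rw [Finset.sum_sub_distrib, class1, sub_self]
  have e1 : ∑ P ∈ (Finset.univ.filter (IsPartition (n := n))).filter
        (fun P => ({k, k'} : Finset (Fin n)) ∈ P),
      ((∏ b ∈ P, T ((b.sort (· ≤ ·)).map G))
        - ∏ b ∈ P, T ((b.sort (· ≤ ·)).map (G ∘ σ)))
      = d * ∑ Q ∈ Finset.univ.filter (IsPartition (n := m)),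
          ∏ b ∈ Q, T ((b.sort (· ≤ ·)).map (G ∘ e)) := by
    rw [← claimC, Finset.mul_sum]
    apply Finset.sum_congr rfl
    intro P hP
    rw [Finset.mem_filter, Finset.mem_filter] at hP
    obtain ⟨⟨_, hPart⟩, hMem⟩ := hP
    exact class3 P hPart hMem
  rw [e1, e2, e3, add_zero, add_zero]

/-- Lemma 5.1, sufficiency: let `W` and `Wᵀ` be families of
functionals on finite sequences of (in/loc/out)-labeled test functions related by
the cluster expansion, with vanishing truncated one-point functions, whose
truncated two-point function of two out-arguments has commutator `c • D(f,h)`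
(`c = i b²/m²`, `D` the commutator function), and whose truncated `n`-point
functions (`n ≥ 3`) are symmetric in two adjacent out-arguments.  Then the full
`n`-point functions satisfy the CCR identity
`W(…, f_k, f_{k+1}, …) − W(…, f_{k+1}, f_k, …) = c · D(f_k, f_{k+1}) · W(…,…)`
whenever positions `k, k+1` carry the out-label. -/
theorem stmt_13 {𝒟 : Type*} (W T : List (Lab × 𝒟) → ℂ)
    (D : 𝒟 → 𝒟 → ℂ) (c : ℂ)
    -- cluster expansion relating W and the truncated functions T
    (hcluster : ∀ xs : List (Lab × 𝒟),
      W xs = ∑ P ∈ Finset.univ.filter (IsPartition (n := xs.length)),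
        ∏ b ∈ P, blockEval T xs b)
    -- truncated one-point functions vanish
    (hone : ∀ x : Lab × 𝒟, T [x] = 0)
    -- truncated two-point commutator for two out-arguments
    (htwo : ∀ f h : 𝒟,
      T [(Lab.outF, f), (Lab.outF, h)] - T [(Lab.outF, h), (Lab.outF, f)]
        = c * D f h)
    -- for n ≥ 3, T is symmetric in two adjacent out-arguments
    (hsym : ∀ (xs ys : List (Lab × 𝒟)) (f h : 𝒟),
      1 ≤ xs.length + ys.length →
      T (xs ++ [(Lab.outF, f), (Lab.outF, h)] ++ ys)
        = T (xs ++ [(Lab.outF, h), (Lab.outF, f)] ++ ys)) :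
    ∀ (xs ys : List (Lab × 𝒟)) (f h : 𝒟),
      W (xs ++ [(Lab.outF, f), (Lab.outF, h)] ++ ys)
          - W (xs ++ [(Lab.outF, h), (Lab.outF, f)] ++ ys)
        = c * D f h * W (xs ++ ys) := by
  intro xs ys f h
  have hNL : (xs ++ [(Lab.outF, f), (Lab.outF, h)] ++ ys).length
      = xs.length + 2 + ys.length := by simp; omega
  have hNL' : (xs ++ [(Lab.outF, h), (Lab.outF, f)] ++ ys).length
      = xs.length + 2 + ys.length := by simp; omega
  have hNE : (xs ++ ys).length = xs.length + ys.length := by simp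
  rw [hcluster, hcluster, hcluster, aux_W_cast T _ _ hNL, aux_W_cast T _ _ hNL',
    aux_W_cast T _ _ hNE]
  set N := xs.length + 2 + ys.length with hN
  have hk0 : xs.length < N := by omega
  have hk1 : xs.length + 1 < N := by omega
  set k : Fin N := ⟨xs.length, hk0⟩ with hkdef
  set k' : Fin N := ⟨xs.length + 1, hk1⟩ with hk'def
  set G : Fin N → Lab × 𝒟 :=
    fun i => (xs ++ [(Lab.outF, f), (Lab.outF, h)] ++ ys).get (Fin.cast hNL.symm i) with hGdef
  have hGval : ∀ i : Fin N,
      G i = (xs ++ [(Lab.outF, f), (Lab.outF, h)] ++ ys)[(i : ℕ)]'(by rw [hNL]; exact i.isLt) := by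
    intro i; rfl
  set e : Fin (xs.length + ys.length) → Fin N :=
    fun j => if (j : ℕ) < xs.length
      then ⟨(j : ℕ), by have := j.isLt; omega⟩
      else ⟨(j : ℕ) + 2, by have := j.isLt; omega⟩ with hedef
  have hev : ∀ j, ((e j : Fin N) : ℕ)
      = if (j : ℕ) < xs.length then (j : ℕ) else (j : ℕ) + 2 := by
    intro j
    by_cases hj : (j : ℕ) < xs.length <;> simp [hedef, hj]
  have hkv : ((k : Fin N) : ℕ) = xs.length := rfl
  have hk'v : ((k' : Fin N) : ℕ) = xs.length + 1 := rfl
  have hswap : ∀ i : Fin N, ((Equiv.swap k k' i : Fin N) : ℕ)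
      = if (i : ℕ) = xs.length then xs.length + 1
        else if (i : ℕ) = xs.length + 1 then xs.length else (i : ℕ) := by
    intro i
    by_cases h1 : i = k
    · subst h1; rw [Equiv.swap_apply_left, hk'v, hkv, if_pos rfl]
    · by_cases h2 : i = k'
      · subst h2
        rw [Equiv.swap_apply_right, hkv, hk'v, if_neg (by omega), if_pos rfl]
      · have h1' : (i : ℕ) ≠ xs.length := fun hc => h1 (Fin.ext (by rw [hc, hkv]))
        have h2' : (i : ℕ) ≠ xs.length + 1 := fun hc => h2 (Fin.ext (by rw [hc, hk'v]))
        rw [Equiv.swap_apply_of_ne_of_ne h1 h2, if_neg h1', if_neg h2']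
  have hG' : (fun i : Fin N =>
        (xs ++ [(Lab.outF, h), (Lab.outF, f)] ++ ys).get (Fin.cast hNL'.symm i))
      = G ∘ Equiv.swap k k' := by
    funext i
    simp only [Function.comp_apply, List.get_eq_getElem, Fin.coe_cast, hGval]
    have hsw := hswap i
    have hiN : (i : ℕ) < N := i.isLt
    rcases lt_trichotomy (i : ℕ) xs.length with hi | hi | hi
    · have hsw' : ((Equiv.swap k k' i : Fin N) : ℕ) = (i : ℕ) := by
        rw [hsw, if_neg (by omega), if_neg (by omega)]
      rw [getA xs ys _ _ _ _ rfl hi, getA xs ys _ _ _ _ hsw' hi]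
    · have hsw' : ((Equiv.swap k k' i : Fin N) : ℕ) = xs.length + 1 := by
        rw [hsw, if_pos hi]
      rw [getB xs ys _ _ _ hi, getC xs ys _ _ _ hsw']
    · rcases eq_or_lt_of_le (Nat.succ_le_of_lt hi) with heq | hgt
      · have hi2 : (i : ℕ) = xs.length + 1 := heq.symm
        have hsw' : ((Equiv.swap k k' i : Fin N) : ℕ) = xs.length := by
          rw [hsw, if_neg (by omega), if_pos hi2]
        rw [getC xs ys _ _ _ hi2, getB xs ys _ _ _ hsw']
      · have hsw' : ((Equiv.swap k k' i : Fin N) : ℕ) = (i : ℕ) := by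
          rw [hsw, if_neg (by omega), if_neg (by omega)]
        have hiN2 : (i : ℕ) < xs.length + 2 + ys.length := hiN
        have hrlt : (i : ℕ) - (xs.length + 2) < ys.length := by omega
        rw [getD xs ys _ _ _ _ (by omega) hrlt,
          getD xs ys _ _ _ _ (by rw [hsw']; omega) hrlt]
  have hG0 : (fun j : Fin (xs.length + ys.length) =>
        (xs ++ ys).get (Fin.cast hNE.symm j)) = G ∘ e := by
    funext j
    simp only [Function.comp_apply, List.get_eq_getElem, Fin.coe_cast, hGval]
    have hjlt : (j : ℕ) < xs.length + ys.length := j.isLt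
    rcases lt_or_ge (j : ℕ) xs.length with hj | hj
    · have hej : ((e j : Fin N) : ℕ) = (j : ℕ) := by rw [hev, if_pos hj]
      rw [getA xs ys _ _ _ _ hej hj, List.getElem_append_left hj]
    · have hej : ((e j : Fin N) : ℕ) = (j : ℕ) + 2 := by rw [hev, if_neg (by omega)]
      have hrlt : (j : ℕ) - xs.length < ys.length := by omega
      rw [getD xs ys _ _ _ _ (by rw [hej]; omega) hrlt, List.getElem_append_right hj]
  rw [hG', hG0]
  refine aux_main T (c * D f h) f h G k k' (by rw [hkv, hk'v]) ?_ ?_ e ?_ ?_ ?_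
    (htwo f h) (fun u v hl => hsym u v f h hl)
  · rw [hGval k, getB xs ys _ _ _ hkv]
  · rw [hGval k', getC xs ys _ _ _ hk'v]
  · intro a b hab
    rw [Fin.lt_def, hev, hev]
    rw [Fin.lt_def] at hab
    have := a.isLt; have := b.isLt
    split_ifs <;> omega
  · intro j
    have hej := hev j
    have hjlt := j.isLt
    constructor
    · intro hc
      rw [hc, hkv] at hej
      split_ifs at hej <;> omega
    · intro hc
      rw [hc, hk'v] at hej
      split_ifs at hej <;> omega
  · intro i hik hik'
    have h1 : (i : ℕ) ≠ xs.length := fun hc => hik (Fin.ext (by rw [hc, hkv]))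
    have h2 : (i : ℕ) ≠ xs.length + 1 := fun hc => hik' (Fin.ext (by rw [hc, hk'v]))
    have hiN : (i : ℕ) < N := i.isLt
    have hiN' : (i : ℕ) < xs.length + 2 + ys.length := hiN
    rcases lt_or_ge (i : ℕ) xs.length with hi | hi
    · refine ⟨⟨(i : ℕ), by omega⟩, ?_⟩
      apply Fin.ext
      rw [hev]
      simp only [if_pos hi]
    · refine ⟨⟨(i : ℕ) - 2, by omega⟩, ?_⟩
      apply Fin.ext
      rw [hev]
      rw [if_neg (by simp; omega)]
      simp
      omega
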